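/- Let G be a finite 3-connected simple graph and let {u, v} be a non-edge of G. Then {u, v} is contractible if and only if there is no 3-cut of G containing both u and v. -/

import Mathlib

open SimpleGraph

variable {V : Type*}

/-- A graph is `k`-connected: it has at least `k+1` vertices, and removing any set of
fewer than `k` vertices leaves a connected graph. -/
def KConnected (k : ℕ) (G : SimpleGraph V) : Prop :=
  k + 1 ≤ Nat.card V ∧ ∀ S : Set V, S.ncard < k → (G.induce Sᶜ).Connected

/-- Contraction of the non-edge `{u, v}`: `u` and `v` are replaced by a single
vertex (represented here by `u`), adjacent to every vertex that was adjacent to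
`u` or to `v`. -/
def contractNonEdge (G : SimpleGraph V) (u v : V) : SimpleGraph {w : V // w ≠ v} where
  Adj a b := a ≠ b ∧ (G.Adj a.1 b.1 ∨ (a.1 = u ∧ G.Adj v b.1) ∨ (b.1 = u ∧ G.Adj a.1 v))
  symm := by
    constructor
    rintro a b ⟨hab, h | ⟨h1, h2⟩ | ⟨h1, h2⟩⟩
    · exact ⟨hab.symm, Or.inl h.symm⟩
    · exact ⟨hab.symm, Or.inr (Or.inr ⟨h1, h2.symm⟩)⟩
    · exact ⟨hab.symm, Or.inr (Or.inl ⟨h1, h2.symm⟩)⟩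
  loopless := ⟨fun a h => h.1 rfl⟩

/-- `{u, v}` is a contractible non-edge of `G`: a non-edge whose contraction yields
a `3`-connected graph. -/
def IsContractibleNonEdge (G : SimpleGraph V) (u v : V) : Prop :=
  u ≠ v ∧ ¬ G.Adj u v ∧ KConnected 3 (contractNonEdge G u v)

/-- The set of contractible non-edges of `G`, as unordered pairs of vertices. -/
def contractibleNonEdges (G : SimpleGraph V) : Set (Sym2 V) :=
  {p | ∃ u v : V, p = s(u, v) ∧ IsContractibleNonEdge G u v}

/-- `S` is a cut of `G`: deleting the vertices of `S` leaves a disconnected graph. -/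
def IsCutSet (G : SimpleGraph V) (S : Set V) : Prop :=
  ¬ (G.induce Sᶜ).Preconnected

/-- `C` is the vertex set of a (connected) component of `G − S`. -/
def IsCompOf (G : SimpleGraph V) (S : Set V) (C : Set V) : Prop :=
  C.Nonempty ∧ C ⊆ Sᶜ ∧ (G.induce C).Connected ∧
    ∀ x ∈ C, ∀ y, y ∉ S → G.Adj x y → y ∈ C

section Aux

variable {V : Type*}

/-- Iso when the representative vertex `u` is deleted. -/
def contractIso (G : SimpleGraph V) {u v : V} (hne : u ≠ v) (S' : Set {w : V // w ≠ v})
    (hu : (⟨u, hne⟩ : {w : V // w ≠ v}) ∈ S') :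
    (G.induce (insert v (Subtype.val '' S'))ᶜ) ≃g ((contractNonEdge G u v).induce S'ᶜ) where
  toFun x := ⟨⟨x.1, fun h => x.2 (Set.mem_insert_iff.mpr (Or.inl h))⟩,
    fun h => x.2 (Set.mem_insert_iff.mpr (Or.inr ⟨_, h, rfl⟩))⟩
  invFun y := ⟨y.1.1, by
    intro h
    rcases Set.mem_insert_iff.mp h with h | ⟨a, ha, hav⟩
    · exact y.1.2 h
    · exact y.2 (by rwa [show a = y.1 from Subtype.ext hav] at ha)⟩
  left_inv x := Subtype.ext rfl
  right_inv y := Subtype.ext (Subtype.ext rfl)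
  map_rel_iff' := by
    rintro ⟨a, ha⟩ ⟨b, hb⟩
    simp only [comap_adj, Function.Embedding.coe_subtype]
    constructor
    · rintro ⟨hne', h | ⟨h1, h2⟩ | ⟨h1, h2⟩⟩
      · exact h
      · exact absurd (Set.mem_insert_iff.mpr (Or.inr ((Set.mem_image _ _ _).mpr ⟨⟨u, hne⟩, hu, h1.symm⟩))) ha
      · exact absurd (Set.mem_insert_iff.mpr (Or.inr ((Set.mem_image _ _ _).mpr ⟨⟨u, hne⟩, hu, h1.symm⟩))) hb
    · intro h
      exact ⟨fun he => h.ne (congrArg Subtype.val he), Or.inl h⟩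

open Classical in
/-- Hom when the representative vertex `u` survives. -/
noncomputable def contractHom (G : SimpleGraph V) {u v : V} (hne : u ≠ v) (hadj : ¬ G.Adj u v)
    (S' : Set {w : V // w ≠ v}) (hu : (⟨u, hne⟩ : {w : V // w ≠ v}) ∉ S') :
    (G.induce (Subtype.val '' S')ᶜ) →g ((contractNonEdge G u v).induce S'ᶜ) where
  toFun x := if h : x.1 = v then ⟨⟨u, hne⟩, hu⟩
    else ⟨⟨x.1, h⟩, fun hs => x.2 ⟨_, hs, rfl⟩⟩
  map_rel' := by
    rintro ⟨a, ha⟩ ⟨b, hb⟩ hab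
    simp only [comap_adj, Function.Embedding.coe_subtype] at hab ⊢
    by_cases hav : a = v <;> by_cases hbv : b = v
    · exact absurd (hav.trans hbv.symm) hab.ne
    · rw [dif_pos hav, dif_neg hbv]
      have h2 : G.Adj v b := hav ▸ hab
      have hbu : b ≠ u := fun h => hadj (h ▸ h2.symm)
      exact ⟨fun he => hbu (congrArg Subtype.val he).symm, Or.inr (Or.inl ⟨rfl, h2⟩)⟩
    · rw [dif_neg hav, dif_pos hbv]
      have h2 : G.Adj a v := hbv ▸ hab
      have hau : a ≠ u := fun h => hadj (h ▸ h2)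
      exact ⟨fun he => hau (congrArg Subtype.val he), Or.inr (Or.inr ⟨rfl, h2⟩)⟩
    · rw [dif_neg hav, dif_neg hbv]
      exact ⟨fun he => hab.ne (congrArg Subtype.val he), Or.inl hab⟩

lemma contractHom_surjective (G : SimpleGraph V) {u v : V} (hne : u ≠ v) (hadj : ¬ G.Adj u v)
    (S' : Set {w : V // w ≠ v}) (hu : (⟨u, hne⟩ : {w : V // w ≠ v}) ∉ S') :
    Function.Surjective (contractHom G hne hadj S' hu) := by
  rintro ⟨⟨w, hw⟩, hw2⟩
  refine ⟨⟨w, fun hs => ?_⟩, ?_⟩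
  · rcases hs with ⟨a, ha, hav⟩
    exact hw2 (by rwa [show a = ⟨w, hw⟩ from Subtype.ext hav] at ha)
  · exact dif_neg hw

lemma five_le_card [Fintype V] {G : SimpleGraph V} (hG : KConnected 3 G) {u v : V}
    (hne : u ≠ v) (hadj : ¬ G.Adj u v) : 5 ≤ Nat.card V := by
  set N : Set V := G.neighborSet u with hN
  have h3 : 3 ≤ N.ncard := by
    by_contra h
    push_neg at h
    have hc := hG.2 N h
    have huN : u ∈ Nᶜ := fun h' => G.irrefl h'
    have hvN : v ∈ Nᶜ := fun h' => hadj h'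
    obtain ⟨p⟩ := hc.preconnected ⟨u, huN⟩ ⟨v, hvN⟩
    have hnn : ¬ p.Nil := SimpleGraph.Walk.not_nil_of_ne
      (fun h' => hne (congrArg Subtype.val h'))
    have := SimpleGraph.Walk.adj_snd hnn
    simp only [comap_adj, Function.Embedding.coe_subtype] at this
    exact (p.getVert 1).2 this
  have hsub : insert u (insert v N) ⊆ Set.univ := Set.subset_univ _
  have hvN : v ∉ N := fun h' => hadj h'
  have huN : u ∉ insert v N := by
    intro h'
    rcases Set.mem_insert_iff.mp h' with h' | h'
    · exact hne h'
    · exact G.irrefl h'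
  have hcard : (insert u (insert v N)).ncard = N.ncard + 2 := by
    rw [Set.ncard_insert_of_notMem huN (Set.toFinite _),
      Set.ncard_insert_of_notMem hvN (Set.toFinite _)]
  have hle : (insert u (insert v N)).ncard ≤ (Set.univ : Set V).ncard :=
    Set.ncard_le_ncard hsub (Set.toFinite _)
  rw [Set.ncard_univ] at hle
  omega

end Aux

/-- Let `G` be a finite 3-connected graph and `{u, v}` a non-edge of `G`. Then
`{u, v}` is contractible if and only if no 3-cut of `G` contains both `u` and `v`. -/
theorem stmt9 {V : Type*} [Fintype V] (G : SimpleGraph V) (hG : KConnected 3 G)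
    (u v : V) (huv : u ≠ v) (hadj : ¬ G.Adj u v) :
    IsContractibleNonEdge G u v ↔
      ¬ ∃ S : Set V, IsCutSet G S ∧ S.ncard = 3 ∧ u ∈ S ∧ v ∈ S := by
  classical
  have h5 : 5 ≤ Nat.card V := five_le_card hG huv hadj
  constructor
  · rintro ⟨-, -, hK⟩ ⟨S, hcut, hS3, huS, hvS⟩
    set S' : Set {w : V // w ≠ v} := {a | a.1 ∈ S} with hS'def
    have himg : Subtype.val '' S' = S \ {v} := by
      ext w
      constructor
      · rintro ⟨a, ha, rfl⟩; exact ⟨ha, a.2⟩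
      · rintro ⟨hw, hwv⟩; exact ⟨⟨w, hwv⟩, hw, rfl⟩
    have hcard' : S'.ncard = 2 := by
      have h1 := Set.ncard_image_of_injective S' Subtype.val_injective
      rw [himg] at h1
      have h2 : (S \ {v}).ncard = 2 := by
        rw [Set.ncard_diff_singleton_of_mem hvS, hS3]
      omega
    have hc := hK.2 S' (by omega)
    have hu' : (⟨u, huv⟩ : {w : V // w ≠ v}) ∈ S' := huS
    have hGc := ((contractIso G huv S' hu').connected_iff).mpr hc
    have hins : insert v (Subtype.val '' S') = S := by
      rw [himg, Set.insert_diff_singleton, Set.insert_eq_of_mem hvS]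
    rw [hins] at hGc
    exact hcut hGc.preconnected
  · intro hno
    refine ⟨huv, hadj, ?_, ?_⟩
    · have e1 : Nat.card {w : V // w ≠ v} = ({v}ᶜ : Set V).ncard := by
        rw [← Nat.card_coe_set_eq]
        exact Nat.card_congr (Equiv.subtypeEquivRight (fun x => Iff.rfl))
      have e2 : ({v}ᶜ : Set V).ncard = Nat.card V - 1 := by
        rw [Set.compl_eq_univ_diff ({v} : Set V),
          Set.ncard_diff (Set.subset_univ _) (Set.toFinite _),
          Set.ncard_univ, Set.ncard_singleton]
      omega
    · intro S' hS'
      by_cases hu' : (⟨u, huv⟩ : {w : V // w ≠ v}) ∈ S'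
      · set S : Set V := insert v (Subtype.val '' S') with hSdef
        have hvim : v ∉ Subtype.val '' S' := by rintro ⟨a, -, ha⟩; exact a.2 ha
        have hcardS : S.ncard = S'.ncard + 1 := by
          rw [hSdef, Set.ncard_insert_of_notMem hvim (Set.toFinite _),
            Set.ncard_image_of_injective _ Subtype.val_injective]
        have hconn : (G.induce Sᶜ).Connected := by
          by_cases h2 : S'.ncard = 2
          · have hS3 : S.ncard = 3 := by omega
            have huS : u ∈ S := Set.mem_insert_iff.mpr
              (Or.inr ((Set.mem_image _ _ _).mpr ⟨⟨u, huv⟩, hu', rfl⟩))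
            have hne' : ¬ IsCutSet G S := fun h =>
              hno ⟨S, h, hS3, huS, Set.mem_insert _ _⟩
            have hpre : (G.induce Sᶜ).Preconnected := not_not.mp hne'
            have hnonempty : Sᶜ.Nonempty := by
              rw [Set.nonempty_compl]
              intro h
              rw [h, Set.ncard_univ] at hS3
              omega
            exact (SimpleGraph.connected_iff _).mpr ⟨hpre, hnonempty.to_subtype⟩
          · exact hG.2 S (by omega)
        exact ((contractIso G huv S' hu').connected_iff).mp hconn
      · have hconn : (G.induce (Subtype.val '' S')ᶜ).Connected :=
          hG.2 _ (by rw [Set.ncard_image_of_injective _ Subtype.val_injective]; omega)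
        exact SimpleGraph.Connected.map (contractHom G huv hadj S' hu')
          (contractHom_surjective G huv hadj S' hu') hconn
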